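/- Let R be a ring and κ = |R| + ℵ₀. A right R-module L is pure-injective if and only if for every pure embedding ν : N → M of right R-modules with |M| ≤ κ and every f : N → L, there exists g : M → L with g ∘ ν = f. -/

import Mathlib

universe u

/-- A monomorphism `ν : N → M` is pure if for every finitely presented module `C`,
the induced map `Hom(C, M) → Hom(C, M / ν(N))` is surjective. -/
def IsPureMono (R : Type u) [Ring R] {N M : Type u}
    [AddCommGroup N] [Module R N] [AddCommGroup M] [Module R M]
    (ν : N →ₗ[R] M) : Prop :=
  ∀ (C : Type u) [AddCommGroup C] [Module R C], Module.FinitePresentation R C →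
    ∀ h : C →ₗ[R] M ⧸ LinearMap.range ν,
      ∃ g : C →ₗ[R] M, (LinearMap.range ν).mkQ ∘ₗ g = h

/-- `L` is pure-injective: injective with respect to all pure monomorphisms. -/
def PureInjective (R : Type u) [Ring R] (L : Type u)
    [AddCommGroup L] [Module R L] : Prop :=
  ∀ (N M : Type u) [AddCommGroup N] [Module R N] [AddCommGroup M] [Module R M]
    (ν : N →ₗ[R] M), Function.Injective ν → IsPureMono R ν →
      ∀ f : N →ₗ[R] L, ∃ g : M →ₗ[R] L, g ∘ₗ ν = f

open Cardinal

section PurityAux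

variable {R : Type u} [Ring R] {M : Type u} [AddCommGroup M] [Module R M]

/-- Equational characterization of purity: every finite system of linear equations with
parameters in `P` that is solvable in `M` is solvable in `P`. -/
def EqPure (P : Submodule R M) : Prop :=
  ∀ (m n : ℕ) (r : Fin m → Fin n → R) (a : Fin m → M), (∀ i, a i ∈ P) →
    (∃ x : Fin n → M, ∀ i, ∑ j, r i j • x j = a i) →
    ∃ y : Fin n → M, (∀ j, y j ∈ P) ∧ ∀ i, ∑ j, r i j • y j = a i

/-- Lifting property of `P` against finitely presented modules. -/
def HomPure (P : Submodule R M) : Prop :=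
  ∀ (C : Type u) [AddCommGroup C] [Module R C], Module.FinitePresentation R C →
    ∀ h : C →ₗ[R] M ⧸ P, ∃ g : C →ₗ[R] M, P.mkQ ∘ₗ g = h

/-- Relative purity of `S ⊓ P` inside `S`, phrased in the ambient module. -/
def RelPure (S P : Submodule R M) : Prop :=
  ∀ (m n : ℕ) (r : Fin m → Fin n → R) (a : Fin m → M), (∀ i, a i ∈ S ⊓ P) →
    (∃ x : Fin n → M, (∀ j, x j ∈ S) ∧ ∀ i, ∑ j, r i j • x j = a i) →
    ∃ y : Fin n → M, (∀ j, y j ∈ S ⊓ P) ∧ ∀ i, ∑ j, r i j • y j = a i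

lemma single_smul_one {n : ℕ} (c : R) (j : Fin n) :
    c • (Pi.single j 1 : Fin n → R) = Pi.single j c := by
  ext j'
  by_cases h : j' = j <;> simp [Pi.single_apply, h]

lemma sum_single_smul {n : ℕ} (v : Fin n → R) : ∑ j, v j • (Pi.single j 1 : Fin n → R) = v := by
  simp_rw [single_smul_one, Finset.univ_sum_single]

theorem EqPure.of_homPure {P : Submodule R M} (hP : HomPure P) : EqPure P := by
  intro m n r a ha ⟨x, hx⟩
  classical
  set K : Submodule R (Fin n → R) := Submodule.span R (Set.range r) with hK
  have hfp : Module.FinitePresentation R ((Fin n → R) ⧸ K) := by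
    refine Module.finitePresentation_of_free_of_surjective K.mkQ (Submodule.mkQ_surjective K) ?_
    rw [Submodule.ker_mkQ]
    exact Submodule.fg_span (Set.finite_range r)
  set ψ : (Fin n → R) →ₗ[R] M := Fintype.linearCombination R x with hψ
  have hψa : ∀ v : Fin n → R, ψ v = ∑ j, v j • x j := fun v =>
    Fintype.linearCombination_apply _ _ v
  have hKker : K ≤ LinearMap.ker (P.mkQ ∘ₗ ψ) := by
    rw [Submodule.span_le]
    rintro _ ⟨i, rfl⟩
    simp only [SetLike.mem_coe, LinearMap.mem_ker, LinearMap.comp_apply,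
      Submodule.mkQ_apply, Submodule.Quotient.mk_eq_zero, hψa]
    rw [hx i]; exact ha i
  obtain ⟨g, hg⟩ := hP ((Fin n → R) ⧸ K) hfp (K.liftQ (P.mkQ ∘ₗ ψ) hKker)
  have hgv : ∀ v : Fin n → R, P.mkQ (g (K.mkQ v)) = P.mkQ (ψ v) := by
    intro v
    rw [← LinearMap.comp_apply, hg, Submodule.mkQ_apply, Submodule.liftQ_apply,
      LinearMap.comp_apply]
  have hsingle : ∀ v : Fin n → R, K.mkQ v = ∑ j, v j • K.mkQ (Pi.single j 1) := by
    intro v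
    simp_rw [← map_smul K.mkQ, single_smul_one, ← map_sum K.mkQ, Finset.univ_sum_single]
  refine ⟨fun j => x j - g (K.mkQ (Pi.single j 1)), fun j => ?_, fun i => ?_⟩
  · rw [← Submodule.Quotient.mk_eq_zero, ← Submodule.mkQ_apply, map_sub, hgv]
    rw [hψa]
    simp [Pi.single_apply]
  · have h1 : ∑ j, r i j • (x j - g (K.mkQ (Pi.single j 1)))
        = (∑ j, r i j • x j) - ∑ j, r i j • g (K.mkQ (Pi.single j 1)) := by
      simp [smul_sub, Finset.sum_sub_distrib]
    have h2 : ∑ j, r i j • g (K.mkQ (Pi.single j 1)) = g (K.mkQ (r i)) := by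
      rw [hsingle (r i)]
      simp [map_sum, map_smul]
    have h3 : K.mkQ (r i) = 0 := by
      rw [Submodule.mkQ_apply, Submodule.Quotient.mk_eq_zero]
      exact Submodule.subset_span ⟨i, rfl⟩
    rw [h1, h2, h3, map_zero, sub_zero, hx i]


theorem HomPure.of_eqPure {P : Submodule R M} (hP : EqPure P) : HomPure P := by
  classical
  intro C _ _ hC h
  haveI := hC
  obtain ⟨n, π, hπ⟩ := Module.Finite.exists_fin' R C
  obtain ⟨t, ht⟩ := Module.FinitePresentation.fg_ker π hπ
  set m := t.card with hm
  set k : Fin m → (Fin n → R) := fun i => (t.equivFin.symm i : Fin n → R) with hk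
  have hrange : Set.range k = ↑t := by
    rw [hk]
    have : Set.range (fun i => (t.equivFin.symm i : Fin n → R))
        = Set.range (Subtype.val : {x // x ∈ t} → (Fin n → R)) :=
      t.equivFin.symm.surjective.range_comp _
    rw [this]
    ext v
    simp
  choose u hu using fun j => Submodule.mkQ_surjective P (h (π (Pi.single j 1)))
  set U : (Fin n → R) →ₗ[R] M := Fintype.linearCombination R u with hU
  have hUv : ∀ v : Fin n → R, U v = ∑ j, v j • u j := fun v =>
    Fintype.linearCombination_apply _ _ v
  have key : ∀ v : Fin n → R, P.mkQ (U v) = h (π v) := by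
    intro v
    conv_rhs => rw [← sum_single_smul v]
    simp only [hUv, map_sum, map_smul, hu]
  have hmem : ∀ i, U (k i) ∈ P := by
    intro i
    rw [← Submodule.Quotient.mk_eq_zero, ← Submodule.mkQ_apply, key]
    have : k i ∈ LinearMap.ker π := by
      rw [← ht]
      exact Submodule.subset_span (by rw [← hrange]; exact ⟨i, rfl⟩)
    rw [LinearMap.mem_ker.mp this, map_zero]
  obtain ⟨y, hy1, hy2⟩ := hP m n (fun i j => k i j) (fun i => U (k i)) hmem
    ⟨u, fun i => (hUv (k i)).symm⟩
  set V : (Fin n → R) →ₗ[R] M := Fintype.linearCombination R (fun j => u j - y j) with hV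
  have hVv : ∀ v : Fin n → R, V v = U v - ∑ j, v j • y j := by
    intro v
    rw [Fintype.linearCombination_apply _ _ v, hUv, ← Finset.sum_sub_distrib]
    simp [smul_sub]
  have hVker : LinearMap.ker π ≤ LinearMap.ker V := by
    rw [← ht, ← hrange, Submodule.span_le]
    rintro _ ⟨i, rfl⟩
    simp only [SetLike.mem_coe, LinearMap.mem_ker]
    rw [hVv, hy2 i, sub_self]
  set e := LinearMap.quotKerEquivOfSurjective π hπ with he
  have hemk : ∀ v : Fin n → R, e (Submodule.Quotient.mk v) = π v := by
    intro v
    rw [he, LinearMap.quotKerEquivOfSurjective]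
    simp [LinearMap.quotKerEquivRange_apply_mk]
  refine ⟨((LinearMap.ker π).liftQ V hVker) ∘ₗ (e.symm : C →ₗ[R] (Fin n → R) ⧸ LinearMap.ker π),
    ?_⟩
  ext c
  obtain ⟨v, rfl⟩ := hπ c
  have hsymm : e.symm (π v) = Submodule.Quotient.mk v := by
    rw [← hemk v, LinearEquiv.symm_apply_apply]
  simp only [LinearMap.comp_apply, LinearEquiv.coe_coe, hsymm, Submodule.liftQ_apply]
  rw [← key v, hVv]
  rw [map_sub, Submodule.mkQ_apply, Submodule.mkQ_apply, sub_eq_self,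
    Submodule.Quotient.mk_eq_zero]
  exact Submodule.sum_mem _ fun j _ => Submodule.smul_mem _ _ (hy1 j)


lemma exists_mem_of_finite {c : Set (Submodule R M)} (hne : c.Nonempty)
    (hdir : DirectedOn (· ≤ ·) c) {m : ℕ} (a : Fin m → M)
    (ha : ∀ i, ∃ P ∈ c, a i ∈ P) : ∃ P ∈ c, ∀ i, a i ∈ P := by
  induction m with
  | zero => exact ⟨hne.choose, hne.choose_spec, fun i => i.elim0⟩
  | succ m ih =>
    obtain ⟨P, hPc, hP⟩ := ih (a ∘ Fin.succ) (fun i => ha i.succ)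
    obtain ⟨Q, hQc, hQ⟩ := ha 0
    obtain ⟨T, hTc, hPT, hQT⟩ := hdir P hPc Q hQc
    refine ⟨T, hTc, fun i => ?_⟩
    rcases Fin.eq_zero_or_eq_succ i with rfl | ⟨j, rfl⟩
    · exact hQT hQ
    · exact hPT (hP j)

lemma EqPure.sSup_chain {c : Set (Submodule R M)} (hne : c.Nonempty)
    (hdir : DirectedOn (· ≤ ·) c) (h : ∀ P ∈ c, EqPure P) : EqPure (sSup c) := by
  intro m n r a ha hx
  have ha' : ∀ i, ∃ P ∈ c, a i ∈ P := by
    intro i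
    exact (Submodule.mem_sSup_of_directed hne hdir).mp (ha i)
  obtain ⟨P, hPc, hP⟩ := exists_mem_of_finite hne hdir a ha'
  obtain ⟨y, hy1, hy2⟩ := h P hPc m n r a hP hx
  exact ⟨y, fun j => (Submodule.mem_sSup_of_directed hne hdir).mpr ⟨P, hPc, hy1 j⟩, hy2⟩

lemma EqPure.sup_of_quotient {P S : Submodule R M} (hP : EqPure P)
    (hT : EqPure (S.map P.mkQ)) : EqPure (P ⊔ S) := by
  intro m n r a ha ⟨x, hx⟩
  have haT : ∀ i, P.mkQ (a i) ∈ S.map P.mkQ := by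
    intro i
    obtain ⟨p, hp, s, hs, hps⟩ := Submodule.mem_sup.mp (ha i)
    refine ⟨s, hs, ?_⟩
    rw [← hps, map_add, Submodule.mkQ_apply, Submodule.mkQ_apply,
      (Submodule.Quotient.mk_eq_zero P).mpr hp, zero_add]
  obtain ⟨t, ht1, ht2⟩ := hT m n r (fun i => P.mkQ (a i)) haT
    ⟨fun j => P.mkQ (x j), fun i => by simp only [← map_smul, ← map_sum, hx]⟩
  choose w hwS hwt using fun j => Submodule.mem_map.mp (ht1 j)
  set b : Fin m → M := fun i => (∑ j, r i j • w j) - a i with hb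
  have hbP : ∀ i, b i ∈ P := by
    intro i
    rw [← Submodule.Quotient.mk_eq_zero, ← Submodule.mkQ_apply, hb]
    simp only [map_sub, map_sum, map_smul, hwt, ht2 i, sub_self]
  obtain ⟨p, hp1, hp2⟩ := hP m n r b hbP
    ⟨fun j => w j - x j, fun i => by
      simp only [smul_sub, Finset.sum_sub_distrib, hx, hb]⟩
  refine ⟨fun j => w j - p j, fun j =>
    sub_mem ((le_sup_right : S ≤ P ⊔ S) (hwS j)) ((le_sup_left : P ≤ P ⊔ S) (hp1 j)),
    fun i => ?_⟩
  simp only [smul_sub, Finset.sum_sub_distrib, hp2 i, hb, sub_sub_cancel]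

lemma RelPure.eqPure_comap {S P : Submodule R M} (h : RelPure S P) :
    EqPure (P.comap S.subtype) := by
  intro m n r a ha ⟨x, hx⟩
  have key : ∀ (v : Fin n → ↥S) (i : Fin m),
      ((∑ j, r i j • v j : ↥S) : M) = ∑ j, r i j • (v j : M) := by
    intro v i
    have : S.subtype (∑ j, r i j • v j) = ∑ j, r i j • S.subtype (v j) := by
      simp only [map_sum, map_smul]
    simpa using this

  obtain ⟨y, hy1, hy2⟩ := h m n r (fun i => (a i : M))
    (fun i => Submodule.mem_inf.mpr ⟨SetLike.coe_mem (a i), Submodule.mem_comap.mp (ha i)⟩)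
    ⟨fun j => (x j : M), fun j => SetLike.coe_mem (x j), fun i => by rw [← key x i, hx i]⟩
  refine ⟨fun j => ⟨y j, (Submodule.mem_inf.mp (hy1 j)).1⟩,
    fun j => Submodule.mem_comap.mpr (Submodule.mem_inf.mp (hy1 j)).2, fun i => ?_⟩
  exact Subtype.ext (by rw [key]; exact hy2 i)

lemma aleph0_le_kappa : ℵ₀ ≤ #R + ℵ₀ := self_le_add_left _ _

lemma mk_R_le_kappa : #R ≤ #R + ℵ₀ := self_le_add_right _ _

lemma mk_span_le {s : Set M} (hs : #s ≤ #R + ℵ₀) :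
    #(Submodule.span R s) ≤ #R + ℵ₀ := by
  classical
  have hmem : ∀ l : List (R × ↥s), (l.map fun p => p.1 • (p.2 : M)).sum ∈ Submodule.span R s := by
    intro l
    induction l with
    | nil => simp
    | cons hd tl ih =>
      simp only [List.map_cons, List.sum_cons]
      exact Submodule.add_mem _
        (Submodule.smul_mem _ _ (Submodule.subset_span hd.2.2)) ih
  have hsurj : Function.Surjective
      (fun l : List (R × ↥s) => (⟨_, hmem l⟩ : ↥(Submodule.span R s))) := by
    rintro ⟨z, hz⟩
    obtain ⟨k, f, g, hfg⟩ := Submodule.mem_span_set'.mp hz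
    refine ⟨List.ofFn (fun i => (f i, g i)), ?_⟩
    ext
    simp only [List.map_ofFn, List.sum_ofFn]
    exact hfg
  have h1 : #(Submodule.span R s) ≤ #(List (R × ↥s)) := mk_le_of_surjective hsurj
  refine h1.trans ((mk_list_le_max _).trans (max_le aleph0_le_kappa ?_))
  have : #(R × ↥s) = #R * #s := by simp
  rw [this]
  calc #R * #s ≤ (#R + ℵ₀) * (#R + ℵ₀) := mul_le_mul' mk_R_le_kappa hs
    _ = #R + ℵ₀ := mul_eq_self aleph0_le_kappa

lemma mk_fin_fun_le {X : Type u} (k : ℕ) (hX : #X ≤ #R + ℵ₀) :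
    #(Fin k → X) ≤ #R + ℵ₀ :=
  ((mk_le_of_injective List.ofFn_injective).trans (mk_list_le_max X)).trans
    (max_le aleph0_le_kappa hX)

/-- Index type for systems of equations with parameters in `A`. -/
structure SysIdx (A : Submodule R M) : Type u where
  m : ULift.{u} ℕ
  n : ULift.{u} ℕ
  r : Fin m.down → Fin n.down → R
  a : Fin m.down → ↥A

def sysEquiv (A : Submodule R M) : SysIdx A ≃
    Σ mn : ULift.{u} ℕ × ULift.{u} ℕ, (Fin mn.1.down → Fin mn.2.down → R) ×
      (Fin mn.1.down → ↥A) where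
  toFun idx := ⟨(idx.m, idx.n), idx.r, idx.a⟩
  invFun s := ⟨s.1.1, s.1.2, s.2.1, s.2.2⟩
  left_inv := fun ⟨m, n, r, a⟩ => rfl
  right_inv := fun ⟨⟨m, n⟩, r, a⟩ => rfl

lemma mk_sysIdx_le {A : Submodule R M} (hA : #A ≤ #R + ℵ₀) :
    #(SysIdx A) ≤ #R + ℵ₀ := by
  rw [mk_congr (sysEquiv A), mk_sigma]
  have hfib : ∀ mn : ULift.{u} ℕ × ULift.{u} ℕ,
      #((Fin mn.1.down → Fin mn.2.down → R) × (Fin mn.1.down → ↥A)) ≤ #R + ℵ₀ := by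
    intro mn
    have : #((Fin mn.1.down → Fin mn.2.down → R) × (Fin mn.1.down → ↥A))
        = #(Fin mn.1.down → Fin mn.2.down → R) * #(Fin mn.1.down → ↥A) := by simp
    rw [this]
    calc _ ≤ (#R + ℵ₀) * (#R + ℵ₀) :=
          mul_le_mul' (mk_fin_fun_le _ (mk_fin_fun_le _ mk_R_le_kappa)) (mk_fin_fun_le _ hA)
      _ = #R + ℵ₀ := mul_eq_self aleph0_le_kappa
  calc Cardinal.sum _ ≤ Cardinal.sum (fun _ : ULift.{u} ℕ × ULift.{u} ℕ => #R + ℵ₀) :=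
        Cardinal.sum_le_sum _ _ hfib
    _ = #(ULift.{u} ℕ × ULift.{u} ℕ) * (#R + ℵ₀) := Cardinal.sum_const' _ _
    _ ≤ (#R + ℵ₀) * (#R + ℵ₀) := by
        refine mul_le_mul' ?_ le_rfl
        have : #(ULift.{u} ℕ × ULift.{u} ℕ) = ℵ₀ := by simp [aleph0_mul_aleph0]
        rw [this]; exact aleph0_le_kappa
    _ = #R + ℵ₀ := mul_eq_self aleph0_le_kappa


variable (P : Submodule R M)

def condA {A : Submodule R M} (idx : SysIdx A) : Prop :=
  (∀ i, (idx.a i : M) ∈ P) ∧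
    ∃ x : Fin idx.n.down → M, ∀ i, ∑ j, idx.r i j • x j = (idx.a i : M)

def condB {A : Submodule R M} (idx : SysIdx A) : Prop :=
  ∃ xb : Fin idx.n.down → M ⧸ P, ∀ i, ∑ j, idx.r i j • xb j = P.mkQ (idx.a i)

open Classical in
noncomputable def witA (hP : EqPure P) {A : Submodule R M} (idx : SysIdx A) :
    Fin idx.n.down → M :=
  if h : condA P idx then
    (hP _ _ idx.r (fun i => (idx.a i : M)) h.1 h.2).choose else 0

lemma witA_spec (hP : EqPure P) {A : Submodule R M} (idx : SysIdx A) (h : condA P idx) :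
    (∀ j, witA P hP idx j ∈ P) ∧
      ∀ i, ∑ j, idx.r i j • witA P hP idx j = (idx.a i : M) := by
  rw [witA]
  rw [dif_pos h]
  exact (hP _ _ idx.r (fun i => (idx.a i : M)) h.1 h.2).choose_spec

open Classical in
noncomputable def witB {A : Submodule R M} (idx : SysIdx A) : Fin idx.n.down → M :=
  if h : condB P idx then
    fun j => (Submodule.mkQ_surjective P (h.choose j)).choose else 0

lemma witB_spec {A : Submodule R M} (idx : SysIdx A) (h : condB P idx) :
    ∀ i, ∑ j, idx.r i j • P.mkQ (witB P idx j) = P.mkQ (idx.a i) := by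
  intro i
  rw [witB, dif_pos h]
  simp_rw [fun j => (Submodule.mkQ_surjective P (h.choose j)).choose_spec]
  exact h.choose_spec i

noncomputable def nextSub (hP : EqPure P) (A : Submodule R M) : Submodule R M :=
  A ⊔ Submodule.span R
    (⋃ idx : SysIdx A, (Set.range (witA P hP idx) ∪ Set.range (witB P idx)))

lemma le_nextSub (hP : EqPure P) (A : Submodule R M) : A ≤ nextSub P hP A := le_sup_left

lemma witA_mem_nextSub (hP : EqPure P) {A : Submodule R M} (idx : SysIdx A) (j) :
    witA P hP idx j ∈ nextSub P hP A :=
  (le_sup_right : _ ≤ nextSub P hP A) (Submodule.subset_span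
    (Set.mem_iUnion.mpr ⟨idx, Or.inl ⟨j, rfl⟩⟩))

lemma witB_mem_nextSub (hP : EqPure P) {A : Submodule R M} (idx : SysIdx A) (j) :
    witB P idx j ∈ nextSub P hP A :=
  (le_sup_right : _ ≤ nextSub P hP A) (Submodule.subset_span
    (Set.mem_iUnion.mpr ⟨idx, Or.inr ⟨j, rfl⟩⟩))

lemma mk_nextSub_le (hP : EqPure P) {A : Submodule R M} (hA : #A ≤ #R + ℵ₀) :
    #(nextSub P hP A) ≤ #R + ℵ₀ := by
  have hW : #(⋃ idx : SysIdx A, (Set.range (witA P hP idx) ∪ Set.range (witB P idx)))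
      ≤ #R + ℵ₀ := by
    refine (mk_iUnion_le _).trans ?_
    have hsup : ⨆ idx : SysIdx A,
        #(Set.range (witA P hP idx) ∪ Set.range (witB P idx) : Set M) ≤ ℵ₀ := by
      refine ciSup_le' fun idx => ?_
      exact (((Set.finite_range _).union (Set.finite_range _)).lt_aleph0).le
    calc _ ≤ (#R + ℵ₀) * ℵ₀ := mul_le_mul' (mk_sysIdx_le hA) hsup
      _ ≤ (#R + ℵ₀) * (#R + ℵ₀) := mul_le_mul' le_rfl aleph0_le_kappa
      _ = #R + ℵ₀ := mul_eq_self aleph0_le_kappa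
  have : nextSub P hP A = Submodule.span R ((A : Set M) ∪
      (⋃ idx : SysIdx A, (Set.range (witA P hP idx) ∪ Set.range (witB P idx)))) := by
    rw [Submodule.span_union, Submodule.span_eq, nextSub]
  rw [this]
  refine mk_span_le ((mk_union_le _ _).trans ?_)
  calc #(A : Set M) + _ ≤ (#R + ℵ₀) + (#R + ℵ₀) := add_le_add hA hW
    _ = #R + ℵ₀ := add_eq_self aleph0_le_kappa

noncomputable def tower (hP : EqPure P) (A₀ : Submodule R M) : ℕ → Submodule R M
  | 0 => A₀
  | (k+1) => nextSub P hP (tower hP A₀ k)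

lemma tower_mono (hP : EqPure P) (A₀ : Submodule R M) : Monotone (tower P hP A₀) :=
  monotone_nat_of_le_succ fun k => le_nextSub P hP _


lemma exists_small_pure (hP : EqPure P) (x : M) :
    ∃ S : Submodule R M, x ∈ S ∧ #S ≤ #R + ℵ₀ ∧ RelPure S P ∧
      EqPure (S.map P.mkQ) := by
  classical
  set A₀ : Submodule R M := Submodule.span R {x} with hA₀
  set t : ℕ → Submodule R M := tower P hP A₀ with ht
  have htmono : Monotone t := tower_mono P hP A₀
  set c : Set (Submodule R M) := Set.range (fun k : ULift.{u} ℕ => t k.down) with hc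
  have hnec : c.Nonempty := ⟨t 0, ⟨0⟩, rfl⟩
  have hdir : DirectedOn (· ≤ ·) c := by
    rintro _ ⟨k, rfl⟩ _ ⟨l, rfl⟩
    exact ⟨t (max k.down l.down), ⟨⟨max k.down l.down⟩, rfl⟩,
      htmono (le_max_left _ _), htmono (le_max_right _ _)⟩
  set S : Submodule R M := sSup c with hS
  have hmem : ∀ z : M, z ∈ S ↔ ∃ k : ℕ, z ∈ t k := by
    intro z
    rw [hS, Submodule.mem_sSup_of_directed hnec hdir]
    constructor
    · rintro ⟨_, ⟨k, rfl⟩, hz⟩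
      exact ⟨k.down, hz⟩
    · rintro ⟨k, hz⟩
      exact ⟨t k, ⟨⟨k⟩, rfl⟩, hz⟩
  have hstage : ∀ {m : ℕ} (v : Fin m → M), (∀ i, v i ∈ S) → ∃ N, ∀ i, v i ∈ t N := by
    intro m v hv
    choose k hk using fun i => (hmem (v i)).mp (hv i)
    exact ⟨Finset.univ.sup k, fun i => htmono (Finset.le_sup (Finset.mem_univ i)) (hk i)⟩
  have htk : ∀ k, #(t k) ≤ #R + ℵ₀ := by
    intro k
    induction k with
    | zero =>
      refine mk_span_le ?_
      have : #({x} : Set M) = 1 := mk_singleton x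
      rw [this]
      exact one_lt_aleph0.le.trans aleph0_le_kappa
    | succ k ih => exact mk_nextSub_le P hP ih
  refine ⟨S, ?_, ?_, ?_, ?_⟩
  · exact (hmem x).mpr ⟨0, Submodule.subset_span rfl⟩
  · have hset : (S : Set M) = ⋃ k : ULift.{u} ℕ, (t k.down : Set M) := by
      ext z
      simp only [SetLike.mem_coe, Set.mem_iUnion]
      rw [hmem z]
      exact ⟨fun ⟨k, hz⟩ => ⟨⟨k⟩, hz⟩, fun ⟨k, hz⟩ => ⟨k.down, hz⟩⟩
    have h1 : #S = #(⋃ k : ULift.{u} ℕ, (t k.down : Set M)) := by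
      rw [← SetLike.coe_sort_coe, hset]
    rw [h1]
    refine (mk_iUnion_le _).trans ?_
    have h2 : ⨆ k : ULift.{u} ℕ, #(t k.down : Set M) ≤ #R + ℵ₀ :=
      ciSup_le' fun k => by rw [SetLike.coe_sort_coe]; exact htk k.down
    calc _ ≤ ℵ₀ * (#R + ℵ₀) := by
          refine mul_le_mul' ?_ h2
          simp
      _ ≤ (#R + ℵ₀) * (#R + ℵ₀) := mul_le_mul' aleph0_le_kappa le_rfl
      _ = #R + ℵ₀ := mul_eq_self aleph0_le_kappa
  · -- RelPure S P
    intro m n r a ha ⟨xs, hxS, hx⟩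
    obtain ⟨N₁, hN₁⟩ := hstage a fun i => (Submodule.mem_inf.mp (ha i)).1
    obtain ⟨N₂, hN₂⟩ := hstage xs hxS
    set idx : SysIdx (t (max N₁ N₂)) :=
      ⟨⟨m⟩, ⟨n⟩, r, fun i => ⟨a i, htmono (le_max_left _ _) (hN₁ i)⟩⟩ with hidx
    have hcA : condA P idx := ⟨fun i => (Submodule.mem_inf.mp (ha i)).2, ⟨xs, hx⟩⟩
    obtain ⟨hyP, hy⟩ := witA_spec P hP idx hcA
    refine ⟨witA P hP idx, fun j => Submodule.mem_inf.mpr ⟨?_, hyP j⟩, hy⟩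
    exact (hmem _).mpr ⟨max N₁ N₂ + 1, witA_mem_nextSub P hP idx j⟩
  · -- EqPure (S.map P.mkQ)
    intro m n r ab hab ⟨xb, hxb⟩
    choose s hsS hsQ using fun i => Submodule.mem_map.mp (hab i)
    obtain ⟨N, hN⟩ := hstage s hsS
    set idx : SysIdx (t N) := ⟨⟨m⟩, ⟨n⟩, r, fun i => ⟨s i, hN i⟩⟩ with hidx
    have hcB : condB P idx := ⟨xb, fun i => by
      rw [show P.mkQ ((idx.a i : M)) = ab i from hsQ i]
      exact hxb i⟩
    have hw := witB_spec P idx hcB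
    refine ⟨fun j => P.mkQ (witB P idx j), fun j =>
      ⟨witB P idx j, (hmem _).mpr ⟨N + 1, witB_mem_nextSub P hP idx j⟩, rfl⟩, fun i => ?_⟩
    rw [hw i]
    exact hsQ i


end PurityAux

section Bridge

variable {R : Type u} [Ring R] {M : Type u} [AddCommGroup M] [Module R M]

lemma HomPure.isPureMono_subtype {Q : Submodule R M} (h : HomPure Q) :
    IsPureMono R Q.subtype := by
  unfold IsPureMono
  rw [Submodule.range_subtype]
  exact fun C _ _ hC => h C hC

lemma IsPureMono.homPure_range {N : Type u} [AddCommGroup N] [Module R N] {ν : N →ₗ[R] M}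
    (h : IsPureMono R ν) : HomPure (LinearMap.range ν) := h

end Bridge

/-- A module `L` is pure-injective iff it is injective with respect to all pure
embeddings `ν : N → M` with `|M| ≤ κ = |R| + ℵ₀`. -/
theorem pureInjective_test_small (R : Type u) [Ring R]
    (L : Type u) [AddCommGroup L] [Module R L] :
    PureInjective R L ↔
      ∀ (N M : Type u) [AddCommGroup N] [Module R N] [AddCommGroup M] [Module R M]
        (ν : N →ₗ[R] M), Function.Injective ν → IsPureMono R ν →
          Cardinal.mk M ≤ Cardinal.mk R + Cardinal.aleph0 →
            ∀ f : N →ₗ[R] L, ∃ g : M →ₗ[R] L, g ∘ₗ ν = f := by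
  constructor
  · intro hPI N M _ _ _ _ ν hinj hpure _ f
    exact hPI N M ν hinj hpure f
  intro hsmall N M _ _ _ _ ν hinj hpure f
  classical
  set P₀ : Submodule R M := LinearMap.range ν with hP₀def
  have hP₀ : EqPure P₀ := EqPure.of_homPure hpure.homPure_range
  set e := LinearEquiv.ofInjective ν hinj with he
  set f₀ : M →ₗ.[R] L := ⟨P₀, f.comp (e.symm : ↥P₀ →ₗ[R] N)⟩ with hf₀def
  set Ω : Set (M →ₗ.[R] L) := {g | f₀ ≤ g ∧ EqPure g.domain} with hΩ
  have hzorn : ∀ c ⊆ Ω, IsChain (· ≤ ·) c → ∀ y ∈ c, ∃ ub ∈ Ω, ∀ z ∈ c, z ≤ ub := by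
    intro c hcΩ hchain y hyc
    have hdir : DirectedOn (· ≤ ·) c := hchain.directedOn
    refine ⟨LinearPMap.sSup c hdir, ⟨?_, ?_⟩, fun z hz => LinearPMap.le_sSup hdir hz⟩
    · exact (hcΩ hyc).1.trans (LinearPMap.le_sSup hdir hyc)
    · show EqPure (sSup (LinearPMap.domain '' c))
      refine EqPure.sSup_chain ⟨y.domain, ⟨y, hyc, rfl⟩⟩ ?_ ?_
      · rintro _ ⟨p, hp, rfl⟩ _ ⟨q, hq, rfl⟩
        obtain ⟨r, hr, h1, h2⟩ := hdir p hp q hq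
        exact ⟨r.domain, ⟨r, hr, rfl⟩, h1.1, h2.1⟩
      · rintro _ ⟨p, hp, rfl⟩
        exact (hcΩ hp).2
  have hf₀Ω : f₀ ∈ Ω := ⟨le_rfl, hP₀⟩
  obtain ⟨g, hf₀g, hmax⟩ := zorn_le_nonempty₀ Ω hzorn f₀ hf₀Ω
  have hgΩ : g ∈ Ω := hmax.1
  have htop : g.domain = ⊤ := by
    by_contra hne
    rw [Submodule.eq_top_iff'] at hne
    push_neg at hne
    obtain ⟨x, hx⟩ := hne
    have hPpure : EqPure g.domain := hgΩ.2
    obtain ⟨S, hxS, hScard, hrel, hmap⟩ := exists_small_pure g.domain hPpure x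
    set Q : Submodule R ↥S := g.domain.comap S.subtype with hQdef
    have hQmono : IsPureMono R Q.subtype :=
      (HomPure.of_eqPure hrel.eqPure_comap).isPureMono_subtype
    set j : ↥Q →ₗ[R] ↥g.domain :=
      (S.subtype.comp Q.subtype).codRestrict g.domain (fun q => q.2) with hjdef
    set f₁ : ↥Q →ₗ[R] L := g.toFun ∘ₗ j with hf₁def
    obtain ⟨h, hh⟩ := hsmall ↥Q ↥S Q.subtype (Submodule.injective_subtype Q) hQmono hScard f₁
    have hcompat : ∀ (u : ↥g.domain) (v : ↥((⟨S, h⟩ : M →ₗ.[R] L).domain)),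
        (u : M) = v → g u = (⟨S, h⟩ : M →ₗ.[R] L) v := by
      intro u v huv
      have hvQ : v ∈ Q := by
        show (S.subtype v) ∈ g.domain
        show (v : M) ∈ g.domain
        rw [← huv]
        exact u.2
      have h1 : (⟨S, h⟩ : M →ₗ.[R] L) v = f₁ ⟨v, hvQ⟩ := by
        exact LinearMap.congr_fun hh ⟨v, hvQ⟩
      have h2 : f₁ ⟨v, hvQ⟩ = g u := by
        have hju : j ⟨v, hvQ⟩ = u := Subtype.ext huv.symm
        show g.toFun (j ⟨v, hvQ⟩) = g.toFun u
        rw [hju]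
      rw [h1, h2]
    set g' := g.sup ⟨S, h⟩ hcompat with hg'def
    have hg'Ω : g' ∈ Ω := by
      refine ⟨hf₀g.trans (g.left_le_sup _ hcompat), ?_⟩
      show EqPure (g.sup ⟨S, h⟩ hcompat).domain
      rw [LinearPMap.domain_sup]
      exact hPpure.sup_of_quotient hmap
    have hle : g' ≤ g := hmax.2 hg'Ω (g.left_le_sup _ hcompat)
    have hxg' : x ∈ g'.domain := by
      rw [hg'def, LinearPMap.domain_sup]
      exact (le_sup_right : S ≤ _) hxS
    exact hx (hle.1 hxg')
  refine ⟨g.toFun ∘ₗ (LinearMap.id.codRestrict g.domain (fun y => htop ▸ Submodule.mem_top)), ?_⟩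
  ext z
  have hν : ν z ∈ P₀ := LinearMap.mem_range_self ν z
  have hagree := hf₀g.2 (x := ⟨ν z, hν⟩)
    (y := ⟨ν z, hf₀g.1 hν⟩) rfl
  have hf₀app : f₀ ⟨ν z, hν⟩ = f z := by
    show f (e.symm ⟨ν z, hν⟩) = f z
    have : (⟨ν z, hν⟩ : ↥P₀) = e z := Subtype.ext (by simp [he])
    rw [this, LinearEquiv.symm_apply_apply]
  simp only [LinearMap.comp_apply, LinearMap.codRestrict_apply, LinearMap.id_apply]
  show g ⟨ν z, _⟩ = f z
  rw [← hf₀app]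
  exact (hagree).symm
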